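/- Let d be a Weyl candidate on ℝ⁴ with the Minkowski metric η = diag(−1,1,1,1), let 𝒟 be its rescaled Bel–Robinson tensor, and let N : Fin 4 → ℝ be a nonzero null vector (η_{μν} N^μ N^ν = 0, N ≠ 0). Then the asymptotic radiant supermomentum Π^α := −𝒟^α{}_{μνρ} N^μ N^ν N^ρ vanishes (Π^α = 0 for all α) if and only if N is a multiple principal null direction of d, i.e. (N^β N^γ d_{αβγδ}) N_ε = (N^β N^γ d_{αβγε}) N_δ for all α, δ, ε. -/

import Mathlib

noncomputable section

/-- Minkowski metric η = diag(-1,1,1,1) on `ℝ⁴` (equal to its own inverse). -/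
def η (α β : Fin 4) : ℝ := if α = β then (if α = 0 then -1 else 1) else 0

/-- Levi-Civita symbol on four indices: the sign of the permutation
`(α,β,γ,δ)` of `(0,1,2,3)`, and `0` if two indices coincide; `ε 0 1 2 3 = 1`. -/
def ε (α β γ δ : Fin 4) : ℝ :=
  ∑ σ : Equiv.Perm (Fin 4),
    if (σ 0, σ 1, σ 2, σ 3) = (α, β, γ, δ) then ((Equiv.Perm.sign σ : ℤ) : ℝ) else 0

/-- A Weyl candidate: antisymmetric in each pair, symmetric under pair
interchange, first Bianchi identity, and trace-free w.r.t. `η`. -/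
def IsWeylCandidate (d : Fin 4 → Fin 4 → Fin 4 → Fin 4 → ℝ) : Prop :=
  (∀ α β γ δ, d α β γ δ = - d β α γ δ) ∧
  (∀ α β γ δ, d α β γ δ = - d α β δ γ) ∧
  (∀ α β γ δ, d α β γ δ = d γ δ α β) ∧
  (∀ α β γ δ, d α β γ δ + d α γ δ β + d α δ β γ = 0) ∧
  (∀ β δ, ∑ α, ∑ γ, η α γ * d α β γ δ = 0)

/-- Rescaled Bel–Robinson tensor
`𝒟_{αβγδ} = d_{αμγ}{}^ν d_{δνβ}{}^μ + d_{αμδ}{}^ν d_{γνβ}{}^μ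
  - (1/8) η_{αβ} η_{γδ} d_{ρσμν} d^{ρσμν}`. -/
def BR (d : Fin 4 → Fin 4 → Fin 4 → Fin 4 → ℝ) (α β γ δ : Fin 4) : ℝ :=
  (∑ μ, ∑ ν, ∑ κ, ∑ lam, η ν κ * η μ lam *
      (d α μ γ κ * d δ ν β lam + d α μ δ κ * d γ ν β lam))
  - (1/8) * η α β * η γ δ *
      (∑ ρ, ∑ s, ∑ μ, ∑ ν, ∑ ρ', ∑ s', ∑ μ', ∑ ν',
        η ρ ρ' * η s s' * η μ μ' * η ν ν' * d ρ s μ ν * d ρ' s' μ' ν')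

/-- Hodge dual `(*d)_{αβγδ} = (1/2) ε_{αβ}{}^{μν} d_{μνγδ}`. -/
def hodge (d : Fin 4 → Fin 4 → Fin 4 → Fin 4 → ℝ) (α β γ δ : Fin 4) : ℝ :=
  (1/2) * ∑ μ, ∑ ν, ∑ κ, ∑ lam, η μ κ * η ν lam * ε α β κ lam * d μ ν γ δ

/-- Electric part `D_{αβ} = n^μ n^ν d_{αμβν}`. -/
def electric (d : Fin 4 → Fin 4 → Fin 4 → Fin 4 → ℝ) (n : Fin 4 → ℝ) (α β : Fin 4) : ℝ :=
  ∑ μ, ∑ ν, n μ * n ν * d α μ β ν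

/-- Magnetic part `C_{αβ} = n^μ n^ν (*d)_{αμβν}`. -/
def magnetic (d : Fin 4 → Fin 4 → Fin 4 → Fin 4 → ℝ) (n : Fin 4 → ℝ) (α β : Fin 4) : ℝ :=
  ∑ μ, ∑ ν, n μ * n ν * hodge d α μ β ν

/-- Asymptotic supermomentum `Π^α = -𝒟^α{}_{μνρ} u^μ u^ν u^ρ`. -/
def supermomentum (d : Fin 4 → Fin 4 → Fin 4 → Fin 4 → ℝ) (u : Fin 4 → ℝ) (α : Fin 4) : ℝ :=
  - ∑ lam, ∑ μ, ∑ ν, ∑ ρ, η α lam * u μ * u ν * u ρ * BR d lam μ ν ρ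

/-- Asymptotic superenergy density `W = 𝒟_{αβγδ} u^α u^β u^γ u^δ`. -/
def superenergy (d : Fin 4 → Fin 4 → Fin 4 → Fin 4 → ℝ) (u : Fin 4 → ℝ) : ℝ :=
  ∑ α, ∑ β, ∑ γ, ∑ δ, u α * u β * u γ * u δ * BR d α β γ δ


namespace Rad
abbrev I4 := Fin 4
abbrev P7 := I4 × I4 × I4 × I4 × I4 × I4 × I4
abbrev P3 := I4 × I4 × I4
abbrev P4 := I4 × I4 × I4 × I4


lemma eta_symm (a b : I4) : η a b = η b a := by
  unfold η; rcases eq_or_ne a b with h | h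
  · subst h; rfl
  · rw [if_neg h, if_neg (Ne.symm h)]

variable (d : I4 → I4 → I4 → I4 → ℝ) (N : I4 → ℝ)

def wE (a b : I4) : ℝ := ∑ μ, ∑ ν, N μ * N ν * d a μ b ν
def Wup (p q : I4) : ℝ := ∑ r, ∑ s, η p r * η q s * wE d N r s
def Qv (lam : I4) : ℝ := ∑ μ, ∑ ν, ∑ ρ, N μ * N ν * N ρ * BR d lam μ ν ρ

variable (hA : ∀ α β γ δ, d α β γ δ = - d β α γ δ)
  (hB : ∀ α β γ δ, d α β γ δ = - d α β δ γ)
  (hC : ∀ α β γ δ, d α β γ δ = d γ δ α β)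

include hC in
lemma w_symm (a b : I4) : wE d N a b = wE d N b a := by
  have : wE d N b a = ∑ ν, ∑ μ, N μ * N ν * d a ν b μ := by
    rw [wE, Finset.sum_comm]
    exact Finset.sum_congr rfl fun μ _ => Finset.sum_congr rfl fun ν _ => by rw [hC]
  rw [this, wE]
  exact Finset.sum_congr rfl fun x _ => Finset.sum_congr rfl fun y _ => by ring

include hA hB in
lemma contract_13 (n l : I4) :
    ∑ μ, ∑ ρ, N μ * N ρ * d ρ n μ l = wE d N n l := by
  have : (∑ μ, ∑ ρ, N μ * N ρ * d ρ n μ l) = ∑ ρ, ∑ μ, N ρ * N μ * d n ρ l μ := by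
    rw [Finset.sum_comm]
    refine Finset.sum_congr rfl fun ρ _ => Finset.sum_congr rfl fun μ _ => ?_
    rw [hA ρ n μ l, hB n ρ μ l]; ring
  rw [this, wE]

-- generic 7-fold reorder:  (μ ν ρ m n k l)  ↦  outer order (ν m k n l μ ρ)
lemma reorder7 (f : I4 → I4 → I4 → I4 → I4 → I4 → I4 → ℝ) :
    (∑ μ, ∑ ν, ∑ ρ, ∑ m, ∑ n, ∑ k, ∑ l, f μ ν ρ m n k l)
    = ∑ ν, ∑ m, ∑ k, ∑ n, ∑ l, ∑ μ, ∑ ρ, f μ ν ρ m n k l := by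
  have h1 : (∑ x : P7, f x.1 x.2.1 x.2.2.1 x.2.2.2.1 x.2.2.2.2.1 x.2.2.2.2.2.1 x.2.2.2.2.2.2)
      = ∑ μ, ∑ ν, ∑ ρ, ∑ m, ∑ n, ∑ k, ∑ l, f μ ν ρ m n k l := by
    simp only [Fintype.sum_prod_type]
  -- x = (ν, m, k, n, l, μ, ρ)
  have h2 : (∑ x : P7, f x.2.2.2.2.2.1 x.1 x.2.2.2.2.2.2 x.2.1 x.2.2.2.1 x.2.2.1 x.2.2.2.2.1)
      = ∑ ν, ∑ m, ∑ k, ∑ n, ∑ l, ∑ μ, ∑ ρ, f μ ν ρ m n k l := by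
    simp only [Fintype.sum_prod_type]
  rw [← h1, ← h2]
  exact (Equiv.sum_comp
    (⟨fun y : P7 => (y.2.2.2.2.2.1, y.1, y.2.2.2.2.2.2, y.2.1, y.2.2.2.1, y.2.2.1, y.2.2.2.2.1),
      fun x : P7 => (x.2.1, x.2.2.2.1, x.2.2.2.2.2.1, x.2.2.2.2.1, x.2.2.2.2.2.2, x.1, x.2.2.1),
      fun y => rfl, fun x => rfl⟩ : P7 ≃ P7)
    (fun x : P7 => f x.1 x.2.1 x.2.2.1 x.2.2.2.1 x.2.2.2.2.1 x.2.2.2.2.2.1 x.2.2.2.2.2.2)).symm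

include hA hB hC in
lemma master (hN : ∑ μ, ∑ ν, η μ ν * N μ * N ν = 0) (lam : I4) :
    Qv d N lam = 2 * ∑ ν, ∑ p, ∑ q, N ν * Wup d N p q * d lam p ν q := by
  obtain ⟨K, hK⟩ : ∃ K, (∑ ρ, ∑ s, ∑ μ, ∑ ν, ∑ ρ', ∑ s', ∑ μ', ∑ ν',
      η ρ ρ' * η s s' * η μ μ' * η ν ν' * d ρ s μ ν * d ρ' s' μ' ν') = K := ⟨_, rfl⟩
  have hQsplit : Qv d N lam
      = (∑ μ, ∑ ν, ∑ ρ, ∑ m, ∑ n, ∑ k, ∑ l,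
          N μ * N ν * N ρ * (η n k * η m l * (d lam m ν k * d ρ n μ l)))
      + (∑ μ, ∑ ν, ∑ ρ, ∑ m, ∑ n, ∑ k, ∑ l,
          N μ * N ν * N ρ * (η n k * η m l * (d lam m ρ k * d ν n μ l)))
      - (∑ μ, ∑ ν, ∑ ρ, (η ν ρ * N ν * N ρ) * (N μ * η lam μ * (1/8) * K)) := by
    rw [Qv]
    rw [← Finset.sum_add_distrib, ← Finset.sum_sub_distrib]
    refine Finset.sum_congr rfl fun μ _ => ?_
    rw [← Finset.sum_add_distrib, ← Finset.sum_sub_distrib]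
    refine Finset.sum_congr rfl fun ν _ => ?_
    rw [← Finset.sum_add_distrib, ← Finset.sum_sub_distrib]
    refine Finset.sum_congr rfl fun ρ _ => ?_
    rw [BR, hK, mul_sub]
    congr 1
    · simp only [Finset.mul_sum, mul_add, Finset.sum_add_distrib]
    · ring
  have hB0 : (∑ μ, ∑ ν : I4, ∑ ρ, (η ν ρ * N ν * N ρ) * (N μ * η lam μ * (1/8) * K)) = 0 := by
    refine Finset.sum_eq_zero fun μ _ => ?_
    have : (∑ ν : I4, ∑ ρ, (η ν ρ * N ν * N ρ) * (N μ * η lam μ * (1/8) * K))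
        = (∑ ν : I4, ∑ ρ, η ν ρ * N ν * N ρ) * (N μ * η lam μ * (1/8) * K) := by
      rw [Finset.sum_mul]
      exact Finset.sum_congr rfl fun ν _ => by rw [Finset.sum_mul]
    rw [this, hN, zero_mul]
  have hA2 : (∑ μ, ∑ ν, ∑ ρ, ∑ m, ∑ n, ∑ k, ∑ l,
          N μ * N ν * N ρ * (η n k * η m l * (d lam m ρ k * d ν n μ l)))
      = (∑ μ, ∑ ν, ∑ ρ, ∑ m, ∑ n, ∑ k, ∑ l,
          N μ * N ν * N ρ * (η n k * η m l * (d lam m ν k * d ρ n μ l))) := by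
    refine Finset.sum_congr rfl fun μ _ => ?_
    calc (∑ ν, ∑ ρ, ∑ m, ∑ n, ∑ k, ∑ l,
          N μ * N ν * N ρ * (η n k * η m l * (d lam m ρ k * d ν n μ l)))
        = ∑ ν, ∑ ρ, ∑ m, ∑ n, ∑ k, ∑ l,
          N μ * N ρ * N ν * (η n k * η m l * (d lam m ρ k * d ν n μ l)) := by
          refine Finset.sum_congr rfl fun ν _ => Finset.sum_congr rfl fun ρ _ =>
            Finset.sum_congr rfl fun m _ => Finset.sum_congr rfl fun n _ =>
            Finset.sum_congr rfl fun k _ => Finset.sum_congr rfl fun l _ => by ring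
      _ = ∑ ν, ∑ ρ, ∑ m, ∑ n, ∑ k, ∑ l,
          N μ * N ν * N ρ * (η n k * η m l * (d lam m ν k * d ρ n μ l)) := Finset.sum_comm
  have hS1 : (∑ μ, ∑ ν, ∑ ρ, ∑ m, ∑ n, ∑ k, ∑ l,
        N μ * N ν * N ρ * (η n k * η m l * (d lam m ν k * d ρ n μ l)))
      = ∑ ν, ∑ p, ∑ q, N ν * Wup d N p q * d lam p ν q := by
    rw [reorder7]
    refine Finset.sum_congr rfl fun ν _ => Finset.sum_congr rfl fun m _ =>
      Finset.sum_congr rfl fun k _ => ?_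
    have WupEq : (∑ n, ∑ l, η n k * η m l * wE d N n l) = Wup d N m k := by
      calc (∑ n, ∑ l, η n k * η m l * wE d N n l)
          = ∑ n, ∑ l, η m l * η k n * wE d N l n := by
            refine Finset.sum_congr rfl fun n _ => Finset.sum_congr rfl fun l _ => ?_
            rw [eta_symm n k, w_symm d N hC n l]; ring
        _ = ∑ l, ∑ n, η m l * η k n * wE d N l n := Finset.sum_comm
        _ = Wup d N m k := rfl
    have inner : ∀ n l : I4,
        (∑ μ, ∑ ρ, N μ * N ν * N ρ * (η n k * η m l * (d lam m ν k * d ρ n μ l)))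
        = (N ν * d lam m ν k) * (η n k * η m l * wE d N n l) := by
      intro n l
      calc (∑ μ, ∑ ρ, N μ * N ν * N ρ * (η n k * η m l * (d lam m ν k * d ρ n μ l)))
          = ∑ μ, ∑ ρ, (N ν * d lam m ν k * (η n k * η m l)) * (N μ * N ρ * d ρ n μ l) := by
            exact Finset.sum_congr rfl fun μ _ => Finset.sum_congr rfl fun ρ _ => by ring
        _ = (N ν * d lam m ν k * (η n k * η m l)) * ∑ μ, ∑ ρ, N μ * N ρ * d ρ n μ l := by
            rw [Finset.mul_sum]
            exact Finset.sum_congr rfl fun μ _ => by rw [Finset.mul_sum]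
        _ = (N ν * d lam m ν k * (η n k * η m l)) * wE d N n l := by
            rw [contract_13 d N hA hB n l]
        _ = (N ν * d lam m ν k) * (η n k * η m l * wE d N n l) := by ring
    calc (∑ n, ∑ l, ∑ μ, ∑ ρ, N μ * N ν * N ρ * (η n k * η m l * (d lam m ν k * d ρ n μ l)))
        = ∑ n, ∑ l, (N ν * d lam m ν k) * (η n k * η m l * wE d N n l) := by
          exact Finset.sum_congr rfl fun n _ => Finset.sum_congr rfl fun l _ => inner n l
      _ = (N ν * d lam m ν k) * ∑ n, ∑ l, η n k * η m l * wE d N n l := by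
          rw [Finset.mul_sum]
          exact Finset.sum_congr rfl fun n _ => by rw [Finset.mul_sum]
      _ = (N ν * d lam m ν k) * Wup d N m k := by rw [WupEq]
      _ = N ν * Wup d N m k * d lam m ν k := by ring
  rw [hQsplit, hA2, hB0, hS1]; ring



def Nl (a : I4) : ℝ := ∑ μ, η a μ * N μ

lemma Nl0 : Nl N 0 = -N 0 := by simp [Nl, η, Fin.sum_univ_four]
lemma Nl1 : Nl N 1 = N 1 := by simp [Nl, η, Fin.sum_univ_four]
lemma Nl2 : Nl N 2 = N 2 := by simp [Nl, η, Fin.sum_univ_four]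
lemma Nl3 : Nl N 3 = N 3 := by simp [Nl, η, Fin.sum_univ_four]

lemma eta_Nl (p : I4) : ∑ r, η p r * Nl N r = N p := by
  fin_cases p <;>
    simp [Fin.sum_univ_four, Nl0, Nl1, Nl2, Nl3, η]

lemma etaV (f : I4 → ℝ) (hf0 : f 0 = 0) (q : I4) : ∑ s, η q s * f s = f q := by
  fin_cases q <;> simp [Fin.sum_univ_four, η, hf0]

lemma Nl_ne (hN0 : N ≠ 0) : ∃ e0, Nl N e0 ≠ 0 := by
  obtain ⟨i, hi⟩ := Function.ne_iff.mp hN0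
  refine ⟨i, ?_⟩
  fin_cases i <;> simp [Nl, η, Fin.sum_univ_four] <;> simpa using hi

lemma sumNN_antisym (f : I4 → I4 → ℝ) (hf : ∀ x y, f x y = - f y x) :
    ∑ x, ∑ y, N x * N y * f x y = 0 := by
  have h : (∑ x, ∑ y, N x * N y * f x y) = - ∑ x, ∑ y, N x * N y * f x y := by
    calc (∑ x, ∑ y, N x * N y * f x y) = ∑ x, ∑ y, -(N x * N y * f y x) := by
          refine Finset.sum_congr rfl fun x _ => Finset.sum_congr rfl fun y _ => ?_
          rw [hf x y]; ring
      _ = - ∑ x, ∑ y, N x * N y * f y x := by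
          rw [← Finset.sum_neg_distrib]
          exact Finset.sum_congr rfl fun x _ => by rw [Finset.sum_neg_distrib]
      _ = - ∑ x, ∑ y, N x * N y * f x y := by
          congr 1
          rw [Finset.sum_comm]
          exact Finset.sum_congr rfl fun x _ => Finset.sum_congr rfl fun y _ => by ring
  linarith

include hB in
lemma contract_A (lam p : I4) : ∑ ν, ∑ q, N ν * N q * d lam p ν q = 0 :=
  sumNN_antisym N _ (fun x y => hB lam p x y)

include hB in
lemma contract_B (lam q : I4) :
    ∑ ν, ∑ p, N ν * N p * d lam p ν q = - wE d N lam q := by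
  have h : (∑ ν, ∑ p, N ν * N p * d lam p ν q) = ∑ p, ∑ ν, -(N p * N ν * d lam p q ν) := by
    rw [Finset.sum_comm]
    refine Finset.sum_congr rfl fun p _ => Finset.sum_congr rfl fun ν _ => ?_
    rw [hB lam p ν q]; ring
  rw [h, wE, ← Finset.sum_neg_distrib]
  exact Finset.sum_congr rfl fun p _ => by rw [Finset.sum_neg_distrib]

include hA hB in
lemma contract_lamN (p q : I4) :
    ∑ lam, ∑ ν, N lam * N ν * d lam p ν q = wE d N p q := by
  rw [wE]
  refine Finset.sum_congr rfl fun lam _ => Finset.sum_congr rfl fun ν _ => ?_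
  rw [hA lam p ν q, hB p lam ν q]; ring

include hB in
lemma wN (a : I4) : ∑ b, wE d N a b * N b = 0 := by
  have h1 : (∑ b, wE d N a b * N b)
      = ∑ b, ∑ μ, ∑ ν, (N μ * N ν * d a μ b ν) * N b := by
    refine Finset.sum_congr rfl fun b _ => ?_
    rw [wE, Finset.sum_mul]
    exact Finset.sum_congr rfl fun μ _ => by rw [Finset.sum_mul]
  rw [h1, Finset.sum_comm]
  refine Finset.sum_eq_zero fun μ _ => ?_
  have h2 : (∑ b, ∑ ν, (N μ * N ν * d a μ b ν) * N b)
      = ∑ b, ∑ ν, N b * N ν * (N μ * d a μ b ν) := by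
    exact Finset.sum_congr rfl fun b _ => Finset.sum_congr rfl fun ν _ => by ring
  rw [h2]
  exact sumNN_antisym N _ (fun x y => by rw [hB a μ x y]; ring)

include hB in
lemma t_eq (α δ : I4) : (∑ β, ∑ γ, N β * N γ * d α β γ δ) = - wE d N α δ := by
  have h : (∑ β, ∑ γ, N β * N γ * d α β γ δ) = ∑ β, ∑ γ, -(N β * N γ * d α β δ γ) := by
    refine Finset.sum_congr rfl fun β _ => Finset.sum_congr rfl fun γ _ => ?_
    rw [hB α β γ δ]; ring
  rw [h, wE, ← Finset.sum_neg_distrib]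
  exact Finset.sum_congr rfl fun β _ => by rw [Finset.sum_neg_distrib]

lemma reorder3 (f : I4 → I4 → I4 → ℝ) :
    (∑ a, ∑ b, ∑ c, f a b c) = ∑ c, ∑ a, ∑ b, f a b c := by
  have h1 : (∑ x : P3, f x.1 x.2.1 x.2.2) = ∑ a, ∑ b, ∑ c, f a b c := by
    simp only [Fintype.sum_prod_type]
  have h2 : (∑ x : P3, f x.2.1 x.2.2 x.1) = ∑ c, ∑ a, ∑ b, f a b c := by
    simp only [Fintype.sum_prod_type]
  rw [← h1, ← h2]
  exact (Equiv.sum_comp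
    (⟨fun y : P3 => (y.2.1, y.2.2, y.1), fun x : P3 => (x.2.2, x.1, x.2.1),
      fun y => rfl, fun x => rfl⟩ : P3 ≃ P3)
    (fun x : P3 => f x.1 x.2.1 x.2.2)).symm

lemma reorder4 (f : I4 → I4 → I4 → I4 → ℝ) :
    (∑ a, ∑ b, ∑ c, ∑ e, f a b c e) = ∑ c, ∑ e, ∑ a, ∑ b, f a b c e := by
  have h1 : (∑ x : P4, f x.1 x.2.1 x.2.2.1 x.2.2.2) = ∑ a, ∑ b, ∑ c, ∑ e, f a b c e := by
    simp only [Fintype.sum_prod_type]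
  have h2 : (∑ x : P4, f x.2.2.1 x.2.2.2 x.1 x.2.1) = ∑ c, ∑ e, ∑ a, ∑ b, f a b c e := by
    simp only [Fintype.sum_prod_type]
  rw [← h1, ← h2]
  exact (Equiv.sum_comp
    (⟨fun y : P4 => (y.2.2.1, y.2.2.2, y.1, y.2.1), fun x : P4 => (x.2.2.1, x.2.2.2, x.1, x.2.1),
      fun y => rfl, fun x => rfl⟩ : P4 ≃ P4)
    (fun x : P4 => f x.1 x.2.1 x.2.2.1 x.2.2.2)).symm

include hA hB hC in
lemma QN (hN : ∑ μ, ∑ ν, η μ ν * N μ * N ν = 0) :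
    (∑ lam, N lam * Qv d N lam) = 2 * ∑ p, ∑ q, Wup d N p q * wE d N p q := by
  have h1 : ∀ lam, N lam * Qv d N lam
      = ∑ ν, ∑ p, ∑ q, 2 * Wup d N p q * (N lam * N ν * d lam p ν q) := by
    intro lam
    rw [master d N hA hB hC hN lam]
    calc N lam * (2 * ∑ ν, ∑ p, ∑ q, N ν * Wup d N p q * d lam p ν q)
        = ∑ ν, (N lam * 2) * (∑ p, ∑ q, N ν * Wup d N p q * d lam p ν q) := by
          rw [← mul_assoc, Finset.mul_sum]
      _ = ∑ ν, ∑ p, ∑ q, 2 * Wup d N p q * (N lam * N ν * d lam p ν q) := by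
          refine Finset.sum_congr rfl fun ν _ => ?_
          rw [Finset.mul_sum]
          refine Finset.sum_congr rfl fun p _ => ?_
          rw [Finset.mul_sum]
          exact Finset.sum_congr rfl fun q _ => by ring
  calc (∑ lam, N lam * Qv d N lam)
      = ∑ lam, ∑ ν, ∑ p, ∑ q, 2 * Wup d N p q * (N lam * N ν * d lam p ν q) :=
        Finset.sum_congr rfl fun lam _ => h1 lam
    _ = ∑ p, ∑ q, ∑ lam, ∑ ν, 2 * Wup d N p q * (N lam * N ν * d lam p ν q) := reorder4 _
    _ = ∑ p, ∑ q, 2 * Wup d N p q * wE d N p q := by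
        refine Finset.sum_congr rfl fun p _ => Finset.sum_congr rfl fun q _ => ?_
        rw [← contract_lamN d N hA hB p q, Finset.mul_sum]
        exact Finset.sum_congr rfl fun lam _ => by rw [Finset.mul_sum]
    _ = 2 * ∑ p, ∑ q, Wup d N p q * wE d N p q := by
        rw [Finset.mul_sum]
        refine Finset.sum_congr rfl fun p _ => ?_
        rw [Finset.mul_sum]
        exact Finset.sum_congr rfl fun q _ => by ring

lemma WupOf (c : ℝ) (V : I4 → ℝ) (hV0 : V 0 = 0)
    (hw : ∀ a b, wE d N a b = c * Nl N a * Nl N b + Nl N a * V b + V a * Nl N b) :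
    ∀ p q, Wup d N p q = c * N p * N q + N p * V q + V p * N q := by
  intro p q
  have hfac : ∀ f g : I4 → ℝ, (∑ r, ∑ s, f r * g s) = (∑ r, f r) * (∑ s, g s) :=
    fun f g => (Finset.sum_mul_sum _ _ _ _).symm
  calc Wup d N p q = ∑ r, ∑ s, η p r * η q s * wE d N r s := rfl
    _ = ∑ r, ∑ s, (c * ((η p r * Nl N r) * (η q s * Nl N s))
        + ((η p r * Nl N r) * (η q s * V s) + (η p r * V r) * (η q s * Nl N s))) := by
        refine Finset.sum_congr rfl fun r _ => Finset.sum_congr rfl fun s _ => ?_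
        rw [hw r s]; ring
    _ = (∑ r, ∑ s, c * ((η p r * Nl N r) * (η q s * Nl N s)))
        + ((∑ r, ∑ s, (η p r * Nl N r) * (η q s * V s))
          + ∑ r, ∑ s, (η p r * V r) * (η q s * Nl N s)) := by
        simp only [Finset.sum_add_distrib]
    _ = c * ((∑ r, η p r * Nl N r) * (∑ s, η q s * Nl N s))
        + ((∑ r, η p r * Nl N r) * (∑ s, η q s * V s)
          + (∑ r, η p r * V r) * (∑ s, η q s * Nl N s)) := by
        have hc : (∑ r, ∑ s, c * ((η p r * Nl N r) * (η q s * Nl N s)))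
            = c * ((∑ r, η p r * Nl N r) * (∑ s, η q s * Nl N s)) := by
          rw [← hfac, Finset.mul_sum]
          exact Finset.sum_congr rfl fun r _ => by rw [Finset.mul_sum]
        rw [hc, hfac, hfac]
    _ = c * N p * N q + N p * V q + V p * N q := by
        rw [eta_Nl, eta_Nl, etaV V hV0, etaV V hV0]; ring

include hA hB hC in
lemma Qdecomp (hN : ∑ μ, ∑ ν, η μ ν * N μ * N ν = 0) (c : ℝ) (V : I4 → ℝ)
    (hWup : ∀ p q, Wup d N p q = c * N p * N q + N p * V q + V p * N q)
    (hw : ∀ a b, wE d N a b = c * Nl N a * Nl N b + Nl N a * V b + V a * Nl N b)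
    (hVN : ∑ q, V q * Nl N q = 0) (lam : I4) :
    Qv d N lam = -2 * (∑ q, V q * V q) * Nl N lam := by
  rw [master d N hA hB hC hN lam]
  have split : (∑ ν, ∑ p, ∑ q, N ν * Wup d N p q * d lam p ν q)
      = (∑ ν, ∑ p, ∑ q, (c * N p) * (N ν * N q * d lam p ν q))
      + ((∑ ν, ∑ p, ∑ q, V q * (N ν * N p * d lam p ν q))
        + (∑ ν, ∑ p, ∑ q, V p * (N ν * N q * d lam p ν q))) := by
    simp only [← Finset.sum_add_distrib]
    refine Finset.sum_congr rfl fun ν _ => Finset.sum_congr rfl fun p _ =>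
      Finset.sum_congr rfl fun q _ => ?_
    rw [hWup p q]; ring
  have T1 : (∑ ν, ∑ p, ∑ q, (c * N p) * (N ν * N q * d lam p ν q)) = 0 := by
    rw [Finset.sum_comm]
    refine Finset.sum_eq_zero fun p _ => ?_
    have h : (∑ ν, ∑ q, (c * N p) * (N ν * N q * d lam p ν q))
        = (c * N p) * ∑ ν, ∑ q, N ν * N q * d lam p ν q := by
      rw [Finset.mul_sum]
      exact Finset.sum_congr rfl fun ν _ => by rw [Finset.mul_sum]
    rw [h, contract_A d N hB lam p, mul_zero]
  have T3 : (∑ ν, ∑ p, ∑ q, V p * (N ν * N q * d lam p ν q)) = 0 := by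
    rw [Finset.sum_comm]
    refine Finset.sum_eq_zero fun p _ => ?_
    have h : (∑ ν, ∑ q, V p * (N ν * N q * d lam p ν q))
        = V p * ∑ ν, ∑ q, N ν * N q * d lam p ν q := by
      rw [Finset.mul_sum]
      exact Finset.sum_congr rfl fun ν _ => by rw [Finset.mul_sum]
    rw [h, contract_A d N hB lam p, mul_zero]
  have T2 : (∑ ν, ∑ p, ∑ q, V q * (N ν * N p * d lam p ν q))
      = - ∑ q, V q * wE d N lam q := by
    rw [reorder3, ← Finset.sum_neg_distrib]
    refine Finset.sum_congr rfl fun q _ => ?_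
    have h : (∑ ν, ∑ p, V q * (N ν * N p * d lam p ν q))
        = V q * ∑ ν, ∑ p, N ν * N p * d lam p ν q := by
      rw [Finset.mul_sum]
      exact Finset.sum_congr rfl fun ν _ => by rw [Finset.mul_sum]
    rw [h, contract_B d N hB lam q]; ring
  rw [split, T1, T2, T3]
  have hfin : (∑ q, V q * wE d N lam q) = (∑ q, V q * V q) * Nl N lam := by
    simp only [Fin.sum_univ_four] at hVN ⊢
    rw [hw lam 0, hw lam 1, hw lam 2, hw lam 3]
    linear_combination (c * Nl N lam + V lam) * hVN
  rw [hfin]; ring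

lemma Pi_eq (α : I4) : supermomentum d N α = - ∑ lam, η α lam * Qv d N lam := by
  rw [supermomentum]
  congr 1
  refine Finset.sum_congr rfl fun lam _ => ?_
  rw [Qv, Finset.mul_sum]
  refine Finset.sum_congr rfl fun μ _ => ?_
  rw [Finset.mul_sum]
  refine Finset.sum_congr rfl fun ν _ => ?_
  rw [Finset.mul_sum]
  exact Finset.sum_congr rfl fun ρ _ => by ring

lemma Pi_zero_iff : (∀ α, supermomentum d N α = 0) ↔ (∀ lam, Qv d N lam = 0) := by
  constructor
  · intro h lam
    have h0 := h lam
    rw [Pi_eq] at h0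
    fin_cases lam <;> simp [Fin.sum_univ_four, η] at h0 <;> exact h0
  · intro h α
    rw [Pi_eq]
    simp [h]

include hC in
lemma exists_c (hNl0 : ∃ e0, Nl N e0 ≠ 0)
    (hw' : ∀ α δ e, wE d N α δ * Nl N e = wE d N α e * Nl N δ) :
    ∃ c : ℝ, ∀ a b, wE d N a b = c * Nl N a * Nl N b := by
  obtain ⟨e0, he0⟩ := hNl0
  refine ⟨wE d N e0 e0 / (Nl N e0 * Nl N e0), fun a b => ?_⟩
  have h1 := hw' a b e0
  have h2 := hw' e0 a e0
  rw [w_symm d N hC e0 a] at h2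
  field_simp
  linear_combination Nl N e0 * h1 + Nl N b * h2

lemma sos6 (x1 x2 x3 x4 x5 x6 : ℝ) (h : x1^2+x2^2+x3^2+2*(x4^2+x5^2+x6^2) = 0) :
    x1 = 0 ∧ x2 = 0 ∧ x3 = 0 ∧ x4 = 0 ∧ x5 = 0 ∧ x6 = 0 := by
  refine ⟨?_, ?_, ?_, ?_, ?_, ?_⟩ <;>
    nlinarith [sq_nonneg x1, sq_nonneg x2, sq_nonneg x3, sq_nonneg x4, sq_nonneg x5, sq_nonneg x6]

lemma decomp_exists (a n1 n2 n3 : ℝ) (ha : a ≠ 0) (hnull : n1^2+n2^2+n3^2 = a^2)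
    (w00 w01 w02 w03 w11 w12 w13 w22 w23 w33 : ℝ)
    (r0 : w00 * a + w01*n1 + w02*n2 + w03*n3 = 0)
    (r1 : w01 * a + w11*n1 + w12*n2 + w13*n3 = 0)
    (r2 : w02 * a + w12*n1 + w22*n2 + w23*n3 = 0)
    (r3 : w03 * a + w13*n1 + w23*n2 + w33*n3 = 0)
    (hE : w00^2 - 2*(w01^2+w02^2+w03^2)
        + (w11^2+w22^2+w33^2+2*(w12^2+w13^2+w23^2)) = 0) :
    ∃ c v1 v2 v3 : ℝ, v1*n1+v2*n2+v3*n3 = 0 ∧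
      w00 = c*(-a)*(-a) ∧
      w01 = c*(-a)*n1 + (-a)*v1 ∧
      w02 = c*(-a)*n2 + (-a)*v2 ∧
      w03 = c*(-a)*n3 + (-a)*v3 ∧
      w11 = c*n1*n1 + n1*v1 + v1*n1 ∧
      w12 = c*n1*n2 + n1*v2 + v1*n2 ∧
      w13 = c*n1*n3 + n1*v3 + v1*n3 ∧
      w22 = c*n2*n2 + n2*v2 + v2*n2 ∧
      w23 = c*n2*n3 + n2*v3 + v2*n3 ∧
      w33 = c*n3*n3 + n3*v3 + v3*n3 := by
  have e0 : a^2*w00 = (w11*n1+w12*n2+w13*n3)*n1+(w12*n1+w22*n2+w23*n3)*n2+(w13*n1+w23*n2+w33*n3)*n3 := by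
    linear_combination a*r0 - n1*r1 - n2*r2 - n3*r3
  have hsos : (a^4*w11 - 2*a^2*(w11*n1+w12*n2+w13*n3)*n1 + ((w11*n1+w12*n2+w13*n3)*n1+(w12*n1+w22*n2+w23*n3)*n2+(w13*n1+w23*n2+w33*n3)*n3)*n1*n1)^2 + (a^4*w22 - 2*a^2*(w12*n1+w22*n2+w23*n3)*n2 + ((w11*n1+w12*n2+w13*n3)*n1+(w12*n1+w22*n2+w23*n3)*n2+(w13*n1+w23*n2+w33*n3)*n3)*n2*n2)^2 + (a^4*w33 - 2*a^2*(w13*n1+w23*n2+w33*n3)*n3 + ((w11*n1+w12*n2+w13*n3)*n1+(w12*n1+w22*n2+w23*n3)*n2+(w13*n1+w23*n2+w33*n3)*n3)*n3*n3)^2 + 2*((a^4*w12 - a^2*((w11*n1+w12*n2+w13*n3)*n2+n1*(w12*n1+w22*n2+w23*n3)) + ((w11*n1+w12*n2+w13*n3)*n1+(w12*n1+w22*n2+w23*n3)*n2+(w13*n1+w23*n2+w33*n3)*n3)*n1*n2)^2 + (a^4*w13 - a^2*((w11*n1+w12*n2+w13*n3)*n3+n1*(w13*n1+w23*n2+w33*n3))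 + ((w11*n1+w12*n2+w13*n3)*n1+(w12*n1+w22*n2+w23*n3)*n2+(w13*n1+w23*n2+w33*n3)*n3)*n1*n3)^2 + (a^4*w23 - a^2*((w12*n1+w22*n2+w23*n3)*n3+n2*(w13*n1+w23*n2+w33*n3)) + ((w11*n1+w12*n2+w13*n3)*n1+(w12*n1+w22*n2+w23*n3)*n2+(w13*n1+w23*n2+w33*n3)*n3)*n2*n3)^2) = 0 := by
    linear_combination a^8*hE + (2*a^4*((w11*n1+w12*n2+w13*n3)^2+(w12*n1+w22*n2+w23*n3)^2+(w13*n1+w23*n2+w33*n3)^2) + ((w11*n1+w12*n2+w13*n3)*n1+(w12*n1+w22*n2+w23*n3)*n2+(w13*n1+w23*n2+w33*n3)*n3)^2*(n1^2+n2^2+n3^2-3*a^2))*hnull - a^4*(a^2*w00+((w11*n1+w12*n2+w13*n3)*n1+(w12*n1+w22*n2+w23*n3)*n2+(w13*n1+w23*n2+w33*n3)*n3))*e0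
      - 2*a^6*(((w11*n1+w12*n2+w13*n3)-a*w01)*r1 + ((w12*n1+w22*n2+w23*n3)-a*w02)*r2 + ((w13*n1+w23*n2+w33*n3)-a*w03)*r3)
  obtain ⟨h11, h22, h33, h12, h13, h23⟩ := sos6 _ _ _ _ _ _ hsos
  refine ⟨((w11*n1+w12*n2+w13*n3)*n1+(w12*n1+w22*n2+w23*n3)*n2+(w13*n1+w23*n2+w33*n3)*n3)/a^4, (a^2*(w11*n1+w12*n2+w13*n3)-((w11*n1+w12*n2+w13*n3)*n1+(w12*n1+w22*n2+w23*n3)*n2+(w13*n1+w23*n2+w33*n3)*n3)*n1)/a^4, (a^2*(w12*n1+w22*n2+w23*n3)-((w11*n1+w12*n2+w13*n3)*n1+(w12*n1+w22*n2+w23*n3)*n2+(w13*n1+w23*n2+w33*n3)*n3)*n2)/a^4,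
    (a^2*(w13*n1+w23*n2+w33*n3)-((w11*n1+w12*n2+w13*n3)*n1+(w12*n1+w22*n2+w23*n3)*n2+(w13*n1+w23*n2+w33*n3)*n3)*n3)/a^4, ?_, ?_, ?_, ?_, ?_, ?_, ?_, ?_, ?_, ?_, ?_⟩
  · field_simp
    linear_combination (-((w11*n1+w12*n2+w13*n3)*n1+(w12*n1+w22*n2+w23*n3)*n2+(w13*n1+w23*n2+w33*n3)*n3))*hnull
  · field_simp
    linear_combination e0
  · field_simp
    linear_combination a^2*r1
  · field_simp
    linear_combination a^2*r2
  · field_simp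
    linear_combination a^2*r3
  · field_simp
    linear_combination h11
  · field_simp
    linear_combination h12
  · field_simp
    linear_combination h13
  · field_simp
    linear_combination h22
  · field_simp
    linear_combination h23
  · field_simp
    linear_combination h33


def zeroV : I4 → ℝ := fun _ => 0

end Rad

/-- For a nonzero null `N`, the asymptotic radiant supermomentum vanishes iff
`N` is a multiple principal null direction of `d`:
`(N^β N^γ d_{αβγδ}) N_ε = (N^β N^γ d_{αβγε}) N_δ`. -/
theorem radiant_supermomentum_zero_iff_multiple_PND
    (d : Fin 4 → Fin 4 → Fin 4 → Fin 4 → ℝ) (hd : IsWeylCandidate d)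
    (N : Fin 4 → ℝ) (hN : ∑ μ, ∑ ν, η μ ν * N μ * N ν = 0) (hN0 : N ≠ 0) :
    (∀ α : Fin 4, supermomentum d N α = 0) ↔
      ∀ α δ e : Fin 4,
        (∑ β, ∑ γ, N β * N γ * d α β γ δ) * (∑ μ, η e μ * N μ) =
        (∑ β, ∑ γ, N β * N γ * d α β γ e) * (∑ μ, η δ μ * N μ) := by
  obtain ⟨hA, hB, hC, hBian, htr⟩ := hd
  have hN' := hN
  simp [Fin.sum_univ_four, η] at hN'
  have hnull : N 1^2 + N 2^2 + N 3^2 = N 0^2 := by linear_combination hN'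
  have ha : N 0 ≠ 0 := by
    intro h0
    apply hN0
    have h1 : N 1 = 0 := by nlinarith [sq_nonneg (N 1), sq_nonneg (N 2), sq_nonneg (N 3)]
    have h2 : N 2 = 0 := by nlinarith [sq_nonneg (N 1), sq_nonneg (N 2), sq_nonneg (N 3)]
    have h3 : N 3 = 0 := by nlinarith [sq_nonneg (N 1), sq_nonneg (N 2), sq_nonneg (N 3)]
    funext i
    fin_cases i <;> simp only [Pi.zero_apply] <;>
      first | exact h0 | exact h1 | exact h2 | exact h3
  have hsymm : ∀ a b, Rad.wE d N a b = Rad.wE d N b a := fun a b => Rad.w_symm d N hC a b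
  have hNl_def : ∀ e : Fin 4, (∑ μ, η e μ * N μ) = Rad.Nl N e := fun _ => rfl
  constructor
  · intro hPi
    have hQ : ∀ lam, Rad.Qv d N lam = 0 := (Rad.Pi_zero_iff d N).mp hPi
    have hE2 : 2 * (∑ p, ∑ q, Rad.Wup d N p q * Rad.wE d N p q) = 0 := by
      rw [← Rad.QN d N hA hB hC hN]
      exact Finset.sum_eq_zero fun lam _ => by rw [hQ lam, mul_zero]
    have r0 := Rad.wN d N hB 0
    have r1 := Rad.wN d N hB 1
    have r2 := Rad.wN d N hB 2
    have r3 := Rad.wN d N hB 3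
    simp only [Fin.sum_univ_four] at r0 r1 r2 r3
    rw [hsymm 1 0] at r1
    rw [hsymm 2 0, hsymm 2 1] at r2
    rw [hsymm 3 0, hsymm 3 1, hsymm 3 2] at r3
    have hshape : (∑ p, ∑ q, Rad.Wup d N p q * Rad.wE d N p q)
        = Rad.wE d N 0 0^2 - 2*(Rad.wE d N 0 1^2 + Rad.wE d N 0 2^2 + Rad.wE d N 0 3^2)
          + (Rad.wE d N 1 1^2 + Rad.wE d N 2 2^2 + Rad.wE d N 3 3^2
            + 2*(Rad.wE d N 1 2^2 + Rad.wE d N 1 3^2 + Rad.wE d N 2 3^2)) := by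
      simp only [Rad.Wup, Fin.sum_univ_four]
      simp [η]
      rw [hsymm 1 0, hsymm 2 0, hsymm 3 0, hsymm 2 1, hsymm 3 1, hsymm 3 2]
      ring
    have hEfin : Rad.wE d N 0 0^2 - 2*(Rad.wE d N 0 1^2 + Rad.wE d N 0 2^2 + Rad.wE d N 0 3^2)
          + (Rad.wE d N 1 1^2 + Rad.wE d N 2 2^2 + Rad.wE d N 3 3^2
            + 2*(Rad.wE d N 1 2^2 + Rad.wE d N 1 3^2 + Rad.wE d N 2 3^2)) = 0 := by
      rw [← hshape]; linarith [hE2]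
    obtain ⟨c, v1, v2, v3, horth, h00, h01, h02, h03, h11, h12, h13, h22, h23, h33⟩ :=
      Rad.decomp_exists (N 0) (N 1) (N 2) (N 3) ha hnull
        (Rad.wE d N 0 0) (Rad.wE d N 0 1) (Rad.wE d N 0 2) (Rad.wE d N 0 3)
        (Rad.wE d N 1 1) (Rad.wE d N 1 2) (Rad.wE d N 1 3)
        (Rad.wE d N 2 2) (Rad.wE d N 2 3) (Rad.wE d N 3 3)
        r0 r1 r2 r3 hEfin
    set V : Fin 4 → ℝ := fun i => if i = 1 then v1 else if i = 2 then v2 else if i = 3 then v3 else 0 with hVdef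
    have hV0 : V 0 = 0 := by simp [hVdef]
    have hV1 : V 1 = v1 := by simp [hVdef]
    have hV2 : V 2 = v2 := by simp [hVdef]
    have hV3 : V 3 = v3 := by simp [hVdef]
    have e00 : Rad.wE d N 0 0 = c * Rad.Nl N 0 * Rad.Nl N 0 + Rad.Nl N 0 * V 0 + V 0 * Rad.Nl N 0 := by
      rw [Rad.Nl0, hV0]; linear_combination h00
    have e01 : Rad.wE d N 0 1 = c * Rad.Nl N 0 * Rad.Nl N 1 + Rad.Nl N 0 * V 1 + V 0 * Rad.Nl N 1 := by
      rw [Rad.Nl0, Rad.Nl1, hV0, hV1]; linear_combination h01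
    have e02 : Rad.wE d N 0 2 = c * Rad.Nl N 0 * Rad.Nl N 2 + Rad.Nl N 0 * V 2 + V 0 * Rad.Nl N 2 := by
      rw [Rad.Nl0, Rad.Nl2, hV0, hV2]; linear_combination h02
    have e03 : Rad.wE d N 0 3 = c * Rad.Nl N 0 * Rad.Nl N 3 + Rad.Nl N 0 * V 3 + V 0 * Rad.Nl N 3 := by
      rw [Rad.Nl0, Rad.Nl3, hV0, hV3]; linear_combination h03
    have e10 : Rad.wE d N 1 0 = c * Rad.Nl N 1 * Rad.Nl N 0 + Rad.Nl N 1 * V 0 + V 1 * Rad.Nl N 0 := by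
      rw [hsymm 1 0, Rad.Nl0, Rad.Nl1, hV0, hV1]; linear_combination h01
    have e20 : Rad.wE d N 2 0 = c * Rad.Nl N 2 * Rad.Nl N 0 + Rad.Nl N 2 * V 0 + V 2 * Rad.Nl N 0 := by
      rw [hsymm 2 0, Rad.Nl0, Rad.Nl2, hV0, hV2]; linear_combination h02
    have e30 : Rad.wE d N 3 0 = c * Rad.Nl N 3 * Rad.Nl N 0 + Rad.Nl N 3 * V 0 + V 3 * Rad.Nl N 0 := by
      rw [hsymm 3 0, Rad.Nl0, Rad.Nl3, hV0, hV3]; linear_combination h03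
    have e11 : Rad.wE d N 1 1 = c * Rad.Nl N 1 * Rad.Nl N 1 + Rad.Nl N 1 * V 1 + V 1 * Rad.Nl N 1 := by
      rw [Rad.Nl1, hV1]; linear_combination h11
    have e12 : Rad.wE d N 1 2 = c * Rad.Nl N 1 * Rad.Nl N 2 + Rad.Nl N 1 * V 2 + V 1 * Rad.Nl N 2 := by
      rw [Rad.Nl1, Rad.Nl2, hV1, hV2]; linear_combination h12
    have e13 : Rad.wE d N 1 3 = c * Rad.Nl N 1 * Rad.Nl N 3 + Rad.Nl N 1 * V 3 + V 1 * Rad.Nl N 3 := by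
      rw [Rad.Nl1, Rad.Nl3, hV1, hV3]; linear_combination h13
    have e21 : Rad.wE d N 2 1 = c * Rad.Nl N 2 * Rad.Nl N 1 + Rad.Nl N 2 * V 1 + V 2 * Rad.Nl N 1 := by
      rw [hsymm 2 1, Rad.Nl1, Rad.Nl2, hV1, hV2]; linear_combination h12
    have e31 : Rad.wE d N 3 1 = c * Rad.Nl N 3 * Rad.Nl N 1 + Rad.Nl N 3 * V 1 + V 3 * Rad.Nl N 1 := by
      rw [hsymm 3 1, Rad.Nl1, Rad.Nl3, hV1, hV3]; linear_combination h13
    have e22 : Rad.wE d N 2 2 = c * Rad.Nl N 2 * Rad.Nl N 2 + Rad.Nl N 2 * V 2 + V 2 * Rad.Nl N 2 := by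
      rw [Rad.Nl2, hV2]; linear_combination h22
    have e23 : Rad.wE d N 2 3 = c * Rad.Nl N 2 * Rad.Nl N 3 + Rad.Nl N 2 * V 3 + V 2 * Rad.Nl N 3 := by
      rw [Rad.Nl2, Rad.Nl3, hV2, hV3]; linear_combination h23
    have e32 : Rad.wE d N 3 2 = c * Rad.Nl N 3 * Rad.Nl N 2 + Rad.Nl N 3 * V 2 + V 3 * Rad.Nl N 2 := by
      rw [hsymm 3 2, Rad.Nl2, Rad.Nl3, hV2, hV3]; linear_combination h23
    have e33 : Rad.wE d N 3 3 = c * Rad.Nl N 3 * Rad.Nl N 3 + Rad.Nl N 3 * V 3 + V 3 * Rad.Nl N 3 := by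
      rw [Rad.Nl3, hV3]; linear_combination h33
    have hw : ∀ a b, Rad.wE d N a b
        = c * Rad.Nl N a * Rad.Nl N b + Rad.Nl N a * V b + V a * Rad.Nl N b := by
      intro a b
      fin_cases a <;> fin_cases b
      exacts [e00, e01, e02, e03, e10, e11, e12, e13,
        e20, e21, e22, e23, e30, e31, e32, e33]
    have hVN : ∑ q, V q * Rad.Nl N q = 0 := by
      simp only [Fin.sum_univ_four, hV0, hV1, hV2, hV3, Rad.Nl0, Rad.Nl1, Rad.Nl2, Rad.Nl3]
      linear_combination horth
    have hWup := Rad.WupOf d N c V hV0 hw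
    have hQd := Rad.Qdecomp d N hA hB hC hN c V hWup hw hVN
    obtain ⟨e0, he0⟩ := Rad.Nl_ne N hN0
    have hS : (∑ q, V q * V q) = 0 := by
      have h := hQd e0
      rw [hQ e0] at h
      rcases mul_eq_zero.mp h.symm with h3 | h3
      · rcases mul_eq_zero.mp h3 with h4 | h4
        · norm_num at h4
        · exact h4
      · exact absurd h3 he0
    have hSx : v1*v1 + v2*v2 + v3*v3 = 0 := by
      have h := hS
      simp only [Fin.sum_univ_four, hV0, hV1, hV2, hV3] at h
      linarith
    have hv1 : v1 = 0 := mul_self_eq_zero.mp (by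
      linarith only [hSx, mul_self_nonneg v1, mul_self_nonneg v2, mul_self_nonneg v3])
    have hv2 : v2 = 0 := mul_self_eq_zero.mp (by
      linarith only [hSx, mul_self_nonneg v1, mul_self_nonneg v2, mul_self_nonneg v3])
    have hv3 : v3 = 0 := mul_self_eq_zero.mp (by
      linarith only [hSx, mul_self_nonneg v1, mul_self_nonneg v2, mul_self_nonneg v3])
    have hVall : ∀ i, V i = 0 := by
      intro i
      simp [hVdef, hv1, hv2, hv3]
    intro α δ e
    rw [Rad.t_eq d N hB α δ, Rad.t_eq d N hB α e, hNl_def e, hNl_def δ,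
      hw α δ, hw α e, hVall α, hVall δ, hVall e]
    ring
  · intro hPND
    have hw' : ∀ α δ e, Rad.wE d N α δ * Rad.Nl N e = Rad.wE d N α e * Rad.Nl N δ := by
      intro α δ e
      have h := hPND α δ e
      rw [Rad.t_eq d N hB α δ, Rad.t_eq d N hB α e, hNl_def e, hNl_def δ] at h
      linear_combination -h
    obtain ⟨c, hw2⟩ := Rad.exists_c d N hC (Rad.Nl_ne N hN0) hw'
    have hwz : ∀ a b, Rad.wE d N a b = c * Rad.Nl N a * Rad.Nl N b
        + Rad.Nl N a * Rad.zeroV b + Rad.zeroV a * Rad.Nl N b := by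
      intro a b
      rw [hw2 a b]
      simp [Rad.zeroV]
    have hWup := Rad.WupOf d N c Rad.zeroV rfl hwz
    have hVN : ∑ q, Rad.zeroV q * Rad.Nl N q = 0 := by simp [Rad.zeroV]
    have hQ : ∀ lam, Rad.Qv d N lam = 0 := by
      intro lam
      rw [Rad.Qdecomp d N hA hB hC hN c Rad.zeroV hWup hwz hVN lam]
      simp [Rad.zeroV]
    exact (Rad.Pi_zero_iff d N).mpr hQ
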